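/- For n ≥ 1, the orbit 𝒟(ℂ) of the diagonal tensor D under the action of G(ℂ) = GL(n,ℂ)×GL(n,ℂ)×GL(n,ℂ) is exactly the set of all n×n×n complex tensors that have complex tensor rank n and multilinear rank (n,n,n). -/
import Mathlib


open scoped BigOperators
open Matrix

/-- An `n×n×n` tensor with entries in `K`. -/
abbrev Tensor (n : ℕ) (K : Type*) := Fin n × Fin n × Fin n → K

namespace Tensor

variable {n : ℕ} {K : Type*}

section CommRing
variable [CommRing K]

/-- The right action of a triple of `n×n` matrices on an `n×n×n` tensor:
`(P(g₁,g₂,g₃))_{ijk} = Σ_{a,b,c} P_{abc} g₁(a,i) g₂(b,j) g₃(c,k)`. -/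
def act (P : Tensor n K) (g₁ g₂ g₃ : Matrix (Fin n) (Fin n) K) : Tensor n K :=
  fun x => ∑ a, ∑ b, ∑ c, P (a, b, c) * g₁ a x.1 * g₂ b x.2.1 * g₃ c x.2.2

/-- The diagonal tensor `D`, with `D_{iii} = 1` and all other entries `0`. -/
def DT (n : ℕ) (K : Type*) [CommRing K] : Tensor n K :=
  fun x => if x.1 = x.2.1 ∧ x.2.1 = x.2.2 then 1 else 0

/-- The orbit of the diagonal tensor `D` under `GL(n,K)×GL(n,K)×GL(n,K)`. -/
def orbitD (n : ℕ) (K : Type*) [CommRing K] : Set (Tensor n K) :=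
  {P | ∃ g₁ g₂ g₃ : Matrix (Fin n) (Fin n) K,
    IsUnit g₁.det ∧ IsUnit g₂.det ∧ IsUnit g₃.det ∧ P = (DT n K).act g₁ g₂ g₃}

/-- `P` admits a decomposition as a sum of `r` rank-one tensors. -/
def HasRankLE (P : Tensor n K) (r : ℕ) : Prop :=
  ∃ u v w : Fin r → Fin n → K, P = fun x => ∑ l, u l x.1 * v l x.2.1 * w l x.2.2

/-- The tensor rank of `P`: the smallest `r` such that `P` is a sum of `r` rank-one tensors. -/
noncomputable def rank (P : Tensor n K) : ℕ := sInf {r | P.HasRankLE r}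

/-- The three flattenings of `P` to an `n²×n` matrix; the columns of `flatten i P` are
indexed by the `i`-th index of `P`. -/
def flatten (i : Fin 3) (P : Tensor n K) : Matrix (Fin n × Fin n) (Fin n) K :=
  ![Matrix.of fun p a => P (a, p.1, p.2),
    Matrix.of fun p b => P (p.1, b, p.2),
    Matrix.of fun p c => P (p.1, p.2, c)] i

/-- Contraction `P *_i v` of the `i`-th index of `P` against a vector `v`. -/
def contr (i : Fin 3) (P : Tensor n K) (v : Fin n → K) : Matrix (Fin n) (Fin n) K :=
  ![Matrix.of fun j k => ∑ a, P (a, j, k) * v a,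
    Matrix.of fun j k => ∑ b, P (j, b, k) * v b,
    Matrix.of fun j k => ∑ c, P (j, k, c) * v c] i

/-- The `j`-th `i`-slice of `P`, i.e. `P *_i e_j`. -/
def slice (i : Fin 3) (P : Tensor n K) (j : Fin n) : Matrix (Fin n) (Fin n) K :=
  contr i P (Pi.single j 1)

/-- The commutation relations in index `i`:
`(P*_i e_j)·adj(P*_i v)·(P*_i e_k) = (P*_i e_k)·adj(P*_i v)·(P*_i e_j)`
for all `v` and all `j < k`. -/
def CommRel (i : Fin 3) (P : Tensor n K) : Prop :=
  ∀ (v : Fin n → K) (j k : Fin n), j < k →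
    slice i P j * (contr i P v).adjugate * slice i P k
      = slice i P k * (contr i P v).adjugate * slice i P j

/-- The matrix `P *_i x`, where `x` is a vector of indeterminates. -/
noncomputable def contrX (i : Fin 3) (P : Tensor n K) :
    Matrix (Fin n) (Fin n) (MvPolynomial (Fin n) K) :=
  ![Matrix.of fun j k => ∑ a, MvPolynomial.C (P (a, j, k)) * MvPolynomial.X a,
    Matrix.of fun j k => ∑ b, MvPolynomial.C (P (j, b, k)) * MvPolynomial.X b,
    Matrix.of fun j k => ∑ c, MvPolynomial.C (P (j, k, c)) * MvPolynomial.X c] i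

/-- `h_i(P;x) = det (P *_i x)`, a polynomial in the indeterminates `x`. -/
noncomputable def hpoly (i : Fin 3) (P : Tensor n K) : MvPolynomial (Fin n) K :=
  (contrX i P).det

/-- The Hessian matrix of a polynomial in the indeterminates `x`. -/
noncomputable def hess (p : MvPolynomial (Fin n) K) :
    Matrix (Fin n) (Fin n) (MvPolynomial (Fin n) K) :=
  Matrix.of fun a b => MvPolynomial.pderiv a (MvPolynomial.pderiv b p)

/-- `f_i(P;x) = (-1)^(n-1) det (H_x (h_i(P;x)))`. -/
noncomputable def fpoly (i : Fin 3) (P : Tensor n K) : MvPolynomial (Fin n) K :=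
  (-1) ^ (n - 1) * (hess (hpoly i P)).det

/-- Substitution `x ↦ g x` in a polynomial in the indeterminates `x`. -/
noncomputable def substX (g : Matrix (Fin n) (Fin n) K) (p : MvPolynomial (Fin n) K) :
    MvPolynomial (Fin n) K :=
  MvPolynomial.aeval (fun j => ∑ k, MvPolynomial.C (g j k) * MvPolynomial.X k) p

end CommRing

/-- A complex tensor is real when all of its entries are real. -/
def IsReal (P : Tensor n ℂ) : Prop := ∀ x, (P x).im = 0

/-- The inclusion of real tensors into complex tensors. -/
noncomputable def toC (n : ℕ) : Tensor n ℝ → Tensor n ℂ := fun P x => (P x : ℂ)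

/-- The orbit `𝒟(ℝ)` of `D` under `GL(n,ℝ)³`, viewed inside the complex tensors. -/
def orbitDR (n : ℕ) : Set (Tensor n ℂ) := toC n '' orbitD n ℝ

/-- The border rank of `P`: the smallest `r` such that `P` is a limit of tensors of
rank at most `r`. -/
noncomputable def borderRank (P : Tensor n ℂ) : ℕ :=
  sInf {r | P ∈ closure {Q : Tensor n ℂ | Q.HasRankLE r}}

/-- The first nonzero entry of every row of `g` equals `1`. -/
def FirstNonzeroOne (g : Matrix (Fin n) (Fin n) ℂ) : Prop :=
  ∀ r c : Fin n, g r c ≠ 0 → (∀ c' : Fin n, c' < c → g r c' = 0) → g r c = 1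

/-- The first `2k` rows of `g` are non-real and not purely imaginary, and occur in complex
conjugate pairs (row `2j+1` conjugate to row `2j`); the remaining rows are real. -/
def ConjPairStructure (k : ℕ) (g : Matrix (Fin n) (Fin n) ℂ) : Prop :=
  (∀ m m' : Fin n, (m : ℕ) < 2 * k → Even (m : ℕ) → (m' : ℕ) = (m : ℕ) + 1 →
      ∀ c, g m' c = (starRingEnd ℂ) (g m c)) ∧
  (∀ m : Fin n, (m : ℕ) < 2 * k → (∃ c, (g m c).im ≠ 0) ∧ (∃ c, (g m c).re ≠ 0)) ∧
  (∀ m : Fin n, 2 * k ≤ (m : ℕ) → ∀ c, (g m c).im = 0)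

/-- A normalized decomposition `P = D(g₁,g₂,g₃)` exhibiting signature `(n-2k, k)`:
the first nonzero entry of every row of `g₁,g₂` is `1`, and each `gᵢ` has its first `2k`
rows non-real occurring in conjugate pairs, with the remaining rows real. -/
def SigDecomp (P : Tensor n ℂ) (k : ℕ) (g₁ g₂ g₃ : Matrix (Fin n) (Fin n) ℂ) : Prop :=
  2 * k ≤ n ∧ IsUnit g₁.det ∧ IsUnit g₂.det ∧ IsUnit g₃.det ∧
  P = (DT n ℂ).act g₁ g₂ g₃ ∧
  FirstNonzeroOne g₁ ∧ FirstNonzeroOne g₂ ∧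
  ConjPairStructure k g₁ ∧ ConjPairStructure k g₂ ∧ ConjPairStructure k g₃

/-- `P` has signature `(n-2k, k)`: its unique rank-`n` decomposition has exactly `2k`
non-real rank-one summands, occurring in conjugate pairs. -/
def HasSignature (P : Tensor n ℂ) (k : ℕ) : Prop :=
  ∃ g₁ g₂ g₃ : Matrix (Fin n) (Fin n) ℂ, SigDecomp P k g₁ g₂ g₃

/-- Cayley's hyperdeterminant of a `2×2×2` tensor. -/
noncomputable def Delta (P : Tensor 2 ℂ) : ℂ :=
  (P (0,0,0) ^ 2 * P (1,1,1) ^ 2 + P (0,0,1) ^ 2 * P (1,1,0) ^ 2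
    + P (0,1,0) ^ 2 * P (1,0,1) ^ 2 + P (0,1,1) ^ 2 * P (1,0,0) ^ 2)
  - 2 * (P (0,0,0) * P (0,0,1) * P (1,1,0) * P (1,1,1)
    + P (0,0,0) * P (0,1,0) * P (1,0,1) * P (1,1,1)
    + P (0,0,0) * P (0,1,1) * P (1,0,0) * P (1,1,1)
    + P (0,0,1) * P (0,1,0) * P (1,0,1) * P (1,1,0)
    + P (0,0,1) * P (0,1,1) * P (1,1,0) * P (1,0,0)
    + P (0,1,0) * P (0,1,1) * P (1,0,1) * P (1,0,0))
  + 4 * (P (0,0,0) * P (0,1,1) * P (1,0,1) * P (1,1,0)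
    + P (0,0,1) * P (0,1,0) * P (1,0,0) * P (1,1,1))

/-- The Levi-Civita symbol on three indices, `ε₁₂₃ = 1`. -/
noncomputable def eps (i j k : Fin 3) : ℂ :=
  if (i, j, k) = ((0 : Fin 3), (1 : Fin 3), (2 : Fin 3)) ∨ (i, j, k) = (1, 2, 0)
      ∨ (i, j, k) = (2, 0, 1) then 1
  else if (i, j, k) = ((2 : Fin 3), (1 : Fin 3), (0 : Fin 3)) ∨ (i, j, k) = (1, 0, 2)
      ∨ (i, j, k) = (0, 2, 1) then -1
  else 0

/-- The degree-6 invariant `τ₃` of `3×3×3` tensors, given by a six-fold Levi-Civita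
contraction. -/
noncomputable def tau3 (P : Tensor 3 ℂ) : ℂ :=
  ∑ i : Fin 3 × Fin 3 × Fin 3, ∑ j : Fin 3 × Fin 3 × Fin 3, ∑ k : Fin 3 × Fin 3 × Fin 3,
    ∑ l : Fin 3 × Fin 3 × Fin 3, ∑ m : Fin 3 × Fin 3 × Fin 3, ∑ o : Fin 3 × Fin 3 × Fin 3,
      P i * P j * P k * P l * P m * P o *
        eps i.1 j.1 k.1 * eps j.2.1 k.2.1 l.2.1 * eps k.2.2 l.2.2 m.2.2 *
        eps l.1 m.1 o.1 * eps m.2.1 o.2.1 i.2.1 * eps o.2.2 i.2.2 j.2.2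

end Tensor

section Aux

open Tensor

variable {n : ℕ}

lemma actD_apply (g₁ g₂ g₃ : Matrix (Fin n) (Fin n) ℂ) (x : Fin n × Fin n × Fin n) :
    (Tensor.DT n ℂ).act g₁ g₂ g₃ x = ∑ a, g₁ a x.1 * g₂ a x.2.1 * g₃ a x.2.2 := by
  unfold Tensor.act Tensor.DT
  refine Finset.sum_congr rfl fun a _ => ?_
  rw [Finset.sum_eq_single a]
  · rw [Finset.sum_eq_single a]
    · simp
    · intro c _ hc; simp [Ne.symm hc]
    · simp
  · intro b _ hb
    exact Finset.sum_eq_zero fun c _ => by simp [Ne.symm hb]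
  · simp

lemma isUnit_det_of_rank_eq {A : Matrix (Fin n) (Fin n) ℂ} (h : A.rank = n) :
    IsUnit A.det := by
  have htop : LinearMap.range A.mulVecLin = ⊤ := by
    apply Submodule.eq_top_of_finrank_eq
    show A.rank = _
    rw [h]
    simp [Module.finrank_pi]
  have hsurj : Function.Surjective A.mulVec := fun y => by
    obtain ⟨x, hx⟩ := LinearMap.range_eq_top.mp htop y
    exact ⟨x, hx⟩
  exact A.isUnit_iff_isUnit_det.mp (Matrix.mulVec_surjective_iff_isUnit.mp hsurj)

lemma rank_kr {B C : Matrix (Fin n) (Fin n) ℂ} (hB : IsUnit B.det) (hC : IsUnit C.det) :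
    (Matrix.of fun (p : Fin n × Fin n) l => B l p.1 * C l p.2).rank = n := by
  set N : Matrix (Fin n × Fin n) (Fin n) ℂ := Matrix.of fun p l => B l p.1 * C l p.2 with hN
  set L : Matrix (Fin n) (Fin n × Fin n) ℂ := Matrix.of fun a p => B⁻¹ p.1 a * C⁻¹ p.2 a
    with hL
  have hLN : L * N = 1 := by
    ext a l
    simp only [Matrix.mul_apply, Matrix.of_apply, hL, hN]
    rw [Fintype.sum_prod_type]
    have key : ∀ i j, B⁻¹ i a * C⁻¹ j a * (B l i * C l j)
        = (B l i * B⁻¹ i a) * (C l j * C⁻¹ j a) := fun i j => by ring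
    simp_rw [key]
    rw [← Finset.sum_mul_sum]
    have h1 : (∑ i, B l i * B⁻¹ i a) = (B * B⁻¹) l a := (Matrix.mul_apply).symm
    have h2 : (∑ j, C l j * C⁻¹ j a) = (C * C⁻¹) l a := (Matrix.mul_apply).symm
    rw [h1, h2, Matrix.mul_nonsing_inv _ hB, Matrix.mul_nonsing_inv _ hC]
    by_cases h : l = a
    · subst h; simp
    · simp [Matrix.one_apply, h, Ne.symm h]
  have h1 : (1 : Matrix (Fin n) (Fin n) ℂ).rank ≤ N.rank := by
    rw [← hLN]; exact Matrix.rank_mul_le_right L N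
  have h2 := Matrix.rank_le_card_width N
  rw [Matrix.rank_one, Fintype.card_fin] at h1
  rw [Fintype.card_fin] at h2
  omega

lemma flatten0_eq {r : ℕ} (u v w : Fin r → Fin n → ℂ) (P : Tensor n ℂ)
    (hP : ∀ x, P x = ∑ l, u l x.1 * v l x.2.1 * w l x.2.2) :
    Tensor.flatten 0 P
      = (Matrix.of fun (p : Fin n × Fin n) l => v l p.1 * w l p.2)
        * (Matrix.of fun l a => u l a) := by
  ext p a
  have h0 : Tensor.flatten 0 P p a = P (a, p.1, p.2) := rfl
  rw [h0, hP, Matrix.mul_apply]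
  exact Finset.sum_congr rfl fun l _ => by simp only [Matrix.of_apply]; try ring

lemma flatten1_eq {r : ℕ} (u v w : Fin r → Fin n → ℂ) (P : Tensor n ℂ)
    (hP : ∀ x, P x = ∑ l, u l x.1 * v l x.2.1 * w l x.2.2) :
    Tensor.flatten 1 P
      = (Matrix.of fun (p : Fin n × Fin n) l => u l p.1 * w l p.2)
        * (Matrix.of fun l b => v l b) := by
  ext p b
  have h0 : Tensor.flatten 1 P p b = P (p.1, b, p.2) := rfl
  rw [h0, hP, Matrix.mul_apply]
  exact Finset.sum_congr rfl fun l _ => by simp only [Matrix.of_apply]; try ring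

lemma flatten2_eq {r : ℕ} (u v w : Fin r → Fin n → ℂ) (P : Tensor n ℂ)
    (hP : ∀ x, P x = ∑ l, u l x.1 * v l x.2.1 * w l x.2.2) :
    Tensor.flatten 2 P
      = (Matrix.of fun (p : Fin n × Fin n) l => u l p.1 * v l p.2)
        * (Matrix.of fun l c => w l c) := by
  ext p c
  have h0 : Tensor.flatten 2 P p c = P (p.1, p.2, c) := rfl
  rw [h0, hP, Matrix.mul_apply]
  exact Finset.sum_congr rfl fun l _ => by simp only [Matrix.of_apply]; try ring

lemma hasRankLE_all (P : Tensor n ℂ) : P.HasRankLE (n * n) := by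
  refine ⟨fun l a => P (a, (finProdFinEquiv.symm l).1, (finProdFinEquiv.symm l).2),
          fun l j => if (finProdFinEquiv.symm l).1 = j then 1 else 0,
          fun l k => if (finProdFinEquiv.symm l).2 = k then 1 else 0, ?_⟩
  funext x
  have := (Equiv.sum_comp (finProdFinEquiv.symm : Fin (n * n) ≃ Fin n × Fin n)
    (fun p : Fin n × Fin n => P (x.1, p.1, p.2)
      * (if p.1 = x.2.1 then (1 : ℂ) else 0) * (if p.2 = x.2.2 then (1 : ℂ) else 0)))
  rw [show (∑ l, P (x.1, (finProdFinEquiv.symm l).1, (finProdFinEquiv.symm l).2)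
        * (if (finProdFinEquiv.symm l).1 = x.2.1 then (1 : ℂ) else 0)
        * (if (finProdFinEquiv.symm l).2 = x.2.2 then (1 : ℂ) else 0))
      = ∑ p : Fin n × Fin n, P (x.1, p.1, p.2)
        * (if p.1 = x.2.1 then (1 : ℂ) else 0) * (if p.2 = x.2.2 then (1 : ℂ) else 0)
    from this]
  rw [Fintype.sum_prod_type]
  rw [Finset.sum_eq_single x.2.1]
  · rw [Finset.sum_eq_single x.2.2]
    · simp
    · intro j _ hj; simp [hj]
    · simp
  · intro i _ hi
    exact Finset.sum_eq_zero fun j _ => by simp [hi]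
  · simp

end Aux

/-- `𝒟(ℂ)` is exactly the set of `n×n×n` complex tensors of complex tensor
rank `n` and multilinear rank `(n,n,n)`. -/
theorem statement_0 (n : ℕ) (hn : 1 ≤ n) :
    Tensor.orbitD n ℂ =
      {P : Tensor n ℂ | Tensor.rank P = n ∧ ∀ i : Fin 3, (Tensor.flatten i P).rank = n} := by
  ext P
  simp only [Set.mem_setOf_eq]
  constructor
  · rintro ⟨g₁, g₂, g₃, h1, h2, h3, rfl⟩
    have hPx : ∀ x, (Tensor.DT n ℂ).act g₁ g₂ g₃ x
        = ∑ l, g₁ l x.1 * g₂ l x.2.1 * g₃ l x.2.2 := actD_apply g₁ g₂ g₃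
    have hf0 : (Tensor.flatten 0 ((Tensor.DT n ℂ).act g₁ g₂ g₃)).rank = n := by
      rw [flatten0_eq _ _ _ _ hPx, show (Matrix.of fun l a => g₁ l a) = g₁ from rfl,
        Matrix.rank_mul_eq_left_of_isUnit_det g₁ _ h1]
      exact rank_kr h2 h3
    have hf1 : (Tensor.flatten 1 ((Tensor.DT n ℂ).act g₁ g₂ g₃)).rank = n := by
      rw [flatten1_eq _ _ _ _ hPx, show (Matrix.of fun l a => g₂ l a) = g₂ from rfl,
        Matrix.rank_mul_eq_left_of_isUnit_det g₂ _ h2]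
      exact rank_kr h1 h3
    have hf2 : (Tensor.flatten 2 ((Tensor.DT n ℂ).act g₁ g₂ g₃)).rank = n := by
      rw [flatten2_eq _ _ _ _ hPx, show (Matrix.of fun l a => g₃ l a) = g₃ from rfl,
        Matrix.rank_mul_eq_left_of_isUnit_det g₃ _ h3]
      exact rank_kr h1 h2
    have hmem : ((Tensor.DT n ℂ).act g₁ g₂ g₃).HasRankLE n :=
      ⟨fun l => g₁ l, fun l => g₂ l, fun l => g₃ l, funext hPx⟩
    refine ⟨le_antisymm (Nat.sInf_le hmem) ?_, ?_⟩
    · refine le_csInf ⟨n, hmem⟩ ?_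
      rintro r ⟨u, v, w, hP⟩
      have hr := flatten2_eq u v w _ (fun x => congrFun hP x)
      have hle : (Tensor.flatten 2 ((Tensor.DT n ℂ).act g₁ g₂ g₃)).rank ≤ r := by
        rw [hr]
        exact (Matrix.rank_mul_le_right _ _).trans
          ((Matrix.rank_le_card_height _).trans_eq (Fintype.card_fin r))
      omega
    · intro i
      fin_cases i
      · exact hf0
      · exact hf1
      · exact hf2
  · rintro ⟨hrank, hflat⟩
    have hmem : P.HasRankLE n := by
      have hne : {r | P.HasRankLE r}.Nonempty := ⟨n * n, hasRankLE_all P⟩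
      have h := Nat.sInf_mem hne
      rwa [show sInf {r | P.HasRankLE r} = n from hrank] at h
    obtain ⟨u, v, w, hP⟩ := hmem
    have hPx : ∀ x, P x = ∑ l, u l x.1 * v l x.2.1 * w l x.2.2 := fun x => congrFun hP x
    have hU : IsUnit (Matrix.of fun l a => u l a).det := by
      apply isUnit_det_of_rank_eq
      have h := hflat 0
      rw [flatten0_eq u v w P hPx] at h
      have hle : _ ≤ (Matrix.of fun l a => u l a).rank := Matrix.rank_mul_le_right
        (Matrix.of fun (p : Fin n × Fin n) l => v l p.1 * w l p.2) (Matrix.of fun l a => u l a)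
      have hle2 := Matrix.rank_le_card_width (Matrix.of fun l (a : Fin n) => u l a)
      rw [Fintype.card_fin] at hle2
      omega
    have hV : IsUnit (Matrix.of fun l a => v l a).det := by
      apply isUnit_det_of_rank_eq
      have h := hflat 1
      rw [flatten1_eq u v w P hPx] at h
      have hle : _ ≤ (Matrix.of fun l a => v l a).rank := Matrix.rank_mul_le_right
        (Matrix.of fun (p : Fin n × Fin n) l => u l p.1 * w l p.2) (Matrix.of fun l a => v l a)
      have hle2 := Matrix.rank_le_card_width (Matrix.of fun l (a : Fin n) => v l a)
      rw [Fintype.card_fin] at hle2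
      omega
    have hW : IsUnit (Matrix.of fun l a => w l a).det := by
      apply isUnit_det_of_rank_eq
      have h := hflat 2
      rw [flatten2_eq u v w P hPx] at h
      have hle : _ ≤ (Matrix.of fun l a => w l a).rank := Matrix.rank_mul_le_right
        (Matrix.of fun (p : Fin n × Fin n) l => u l p.1 * v l p.2) (Matrix.of fun l a => w l a)
      have hle2 := Matrix.rank_le_card_width (Matrix.of fun l (a : Fin n) => w l a)
      rw [Fintype.card_fin] at hle2
      omega
    exact ⟨Matrix.of fun l a => u l a, Matrix.of fun l a => v l a, Matrix.of fun l a => w l a,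
      hU, hV, hW, funext fun x => by rw [hPx x, actD_apply]; rfl⟩
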